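/- Let N ≥ 1 and let τ : Fin N → ℝ be delays on the links of a unidirectional ring (the link of index j goes from node j+1 to node j, indices modulo N). Then there exist time shifts η : Fin N → ℝ such that all transformed delays are equal to the average delay: τ j + η (j+1) − η j = (∑_{k} τ k) / N for every j ∈ Fin N. -/

import Mathlib

/-- **Homogenization of delays in a unidirectional ring.**
For any delays `τ` on the links of a unidirectional ring of `N ≥ 1` nodes, there
exist time shifts `η` such that every transformed delay
`τ̃_j = τ_j + η_{j+1} − η_j` equals the average delay `(∑ τ_k) / N`. -/
theorem ring_delays_homogenizable (N : ℕ) [NeZero N] (τ : Fin N → ℝ) :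
    ∃ η : Fin N → ℝ, ∀ j : Fin N,
      τ j + η (j + 1) - η j = (∑ k : Fin N, τ k) / N := by
  open Fin.NatCast in
  have hN : (N:ℝ) ≠ 0 := Nat.cast_ne_zero.mpr (NeZero.ne N)
  set A := (∑ k : Fin N, τ k) / N with hA
  have hsum : ∑ i ∈ Finset.range N, (τ i - A) = 0 := by
    rw [← Fin.sum_univ_eq_sum_range (fun i => τ i - A) N]
    rw [Finset.sum_sub_distrib, Finset.sum_const, Finset.card_univ, Fintype.card_fin]
    rw [hA]
    simp only [Fin.cast_val_eq_self, nsmul_eq_mul]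
    field_simp
    ring
  refine ⟨fun j => -∑ i ∈ Finset.range j.val, (τ i - A), fun j => ?_⟩
  by_cases h : j.val + 1 < N
  · have hval : ((j + 1 : Fin N)).val = j.val + 1 := by
      have : ((1 : Fin N)).val = 1 := by
        rcases N with _ | _ | n
        · exact absurd rfl (NeZero.ne 0)
        · omega
        · rfl
      rw [Fin.add_def, this]
      simp [Nat.mod_eq_of_lt h]
    beta_reduce
    rw [hval, Finset.sum_range_succ]
    have : ((j.val : Fin N)) = j := Fin.cast_val_eq_self j
    rw [this]
    ring
  · have hj : j.val + 1 = N := by omega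
    have hval : ((j + 1 : Fin N)).val = 0 := by
      simp only [Fin.add_def, Fin.val_mk, Fin.val_one']
      rcases Nat.eq_or_lt_of_le (Nat.one_le_iff_ne_zero.mpr (NeZero.ne N)) with h1 | h1
      · subst h1
        omega
      · rw [Nat.one_mod_eq_one.mpr (by omega), hj, Nat.mod_self]
    beta_reduce
    rw [hval]
    have hjv : j.val = N - 1 := by omega
    have hsplit : ∑ i ∈ Finset.range N, (τ i - A) =
        (∑ i ∈ Finset.range j.val, (τ i - A)) + (τ j - A) := by
      have hr : Finset.range N = Finset.range (j.val + 1) := by rw [hj]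
      rw [hr, Finset.sum_range_succ, Fin.cast_val_eq_self j]
    rw [hsplit] at hsum
    simp only [Finset.range_zero, Finset.sum_empty, neg_zero]
    linarith
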